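/- Iterated correctness of collaborative remote state preparation: let θ₁, …, θₙ ∈ ℝ and prepare qubits |+_{θ_j}⟩ for j = 1,…,n. For each j ≠ n, apply CNOT with qubit n as control and qubit j as target, then measure qubit j in the computational basis with outcome t_j ∈ {0,1}. Then the remaining qubit n is in the state |+_{θ'}⟩ (up to global phase) with θ' = θₙ + Σ_{j=1}^{n−1} (−1)^{t_j} θ_j. -/

import Mathlib

open Complex

/-- Iterated correctness of collaborative remote state preparation.
`plus γ` is the qubit state `|+_γ⟩ = (|0⟩ + e^{iγ}|1⟩)/√2`.  Starting from
`⊗_{j<m} |+_{θ j}⟩ ⊗ |+_{θₙ}⟩`, applying a CNOT with the last qubit as control and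
each qubit `j` as target and then measuring qubit `j` in the computational basis with
outcome `t j` leaves the last qubit (up to global phase and normalization) in the state
`|+_{θ'}⟩` with `θ' = θₙ + Σ_j (−1)^{t j} θ j`.  The unnormalized post-measurement state
of the control is `a ↦ (∏_j plus (θ j) (t j + a)) * plus θₙ a`. -/
theorem stmt_14 (m : ℕ) (θ : Fin m → ℝ) (θn : ℝ) (t : Fin m → Fin 2) :
    let plus : ℝ → Fin 2 → ℂ :=
      fun γ b => Complex.exp (γ * (b : ℕ) * Complex.I) / Real.sqrt 2
    let res : Fin 2 → ℂ := fun a => (∏ j, plus (θ j) (t j + a)) * plus θn a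
    let θ' : ℝ := θn + ∑ j, (-1 : ℝ) ^ ((t j : ℕ)) * θ j
    ∃ c : ℂ, c ≠ 0 ∧ res = c • plus θ' := by
  intro plus res θ'
  have hs2 : ((Real.sqrt 2 : ℝ) : ℂ) ≠ 0 := by
    norm_cast
    positivity
  have hplus : ∀ γ b, plus γ b ≠ 0 := fun γ b =>
    div_ne_zero (Complex.exp_ne_zero _) hs2
  refine ⟨∏ j, plus (θ j) (t j), Finset.prod_ne_zero_iff.mpr fun j _ => hplus _ _, ?_⟩
  funext a
  have key : ∀ a : Fin 2,
      (∏ j, Complex.exp ((θ j : ℂ) * ((t j + a : Fin 2) : ℕ) * Complex.I)) *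
        Complex.exp ((θn : ℂ) * (a : ℕ) * Complex.I)
      = (∏ j, Complex.exp ((θ j : ℂ) * ((t j : ℕ)) * Complex.I)) *
        Complex.exp ((θ' : ℂ) * (a : ℕ) * Complex.I) := by
    intro a
    fin_cases a
    · simp
    · simp only [show (⟨1, by norm_num⟩ : Fin 2) = 1 from rfl]
      have h1 : ∀ j, Complex.exp ((θ j : ℂ) * ((t j + 1 : Fin 2) : ℕ) * Complex.I)
          = Complex.exp ((θ j : ℂ) * ((t j : ℕ)) * Complex.I) *
            Complex.exp (((-1 : ℝ) ^ ((t j : ℕ)) * θ j : ℝ) * Complex.I) := by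
        intro j
        rw [← Complex.exp_add]
        congr 1
        have hv : ((t j + 1 : Fin 2) : ℕ) = ((t j : ℕ) + 1) % 2 := by
          simp [Fin.val_add]
        have h2 : (t j : ℕ) = 0 ∨ (t j : ℕ) = 1 := by omega
        rcases h2 with h | h <;> rw [hv, h] <;> push_cast <;> ring
      have h2 : (θ' : ℂ) = (θn : ℂ) + ∑ j, (((-1 : ℝ) ^ ((t j : ℕ)) * θ j : ℝ) : ℂ) := by
        simp [θ']
      simp only [h2, Fin.val_one, Nat.cast_one, mul_one]
      rw [Finset.prod_congr rfl fun j _ => h1 j, Finset.prod_mul_distrib, add_mul,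
        Complex.exp_add, Finset.sum_mul]
      simp only [← Complex.exp_sum, ← Complex.exp_add]
      congr 1
      push_cast
      ring_nf
      have e : ∑ x, (θ x : ℂ) * ((t x : ℕ) : ℂ) * Complex.I
          = ∑ x, Complex.I * (θ x : ℂ) * ((t x : ℕ) : ℂ) :=
        Finset.sum_congr rfl fun x _ => by ring
      rw [e]
      ring
  have := key a
  simp only [plus, res, Pi.smul_apply, smul_eq_mul]
  rw [Finset.prod_div_distrib, Finset.prod_div_distrib, div_mul_div_comm,
    div_mul_div_comm, this]
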